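/- Let n ≥ 2 and let ξ be a primitive m-th root of unity with m not equal to n. Then Φ_n(ξ) is a nonzero real number if and only if m divides φ(n). -/
import Mathlib

open Polynomial Complex Finset

theorem cyclotomic_eval_real_iff (n m : ℕ) (hn : 2 ≤ n) (hm : 1 ≤ m) (hmn : m ≠ n)
    (ξ : ℂ) (hξ : IsPrimitiveRoot ξ m) :
    ((cyclotomic n ℂ).eval ξ ≠ 0 ∧ ((cyclotomic n ℂ).eval ξ).im = 0) ↔
      m ∣ n.totient := by
  have hn0 : n ≠ 0 := by omega
  have hm0 : m ≠ 0 := by omega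
  haveI : NeZero n := ⟨hn0⟩
  haveI : NeZero (n : ℂ) := ⟨by exact_mod_cast hn0⟩
  obtain ⟨z, hz⟩ : ∃ z : ℂ, IsPrimitiveRoot z n := ⟨_, Complex.isPrimitiveRoot_exp n hn0⟩
  have hP : cyclotomic n ℂ = ∏ μ ∈ primitiveRoots n ℂ, (X - C μ) :=
    cyclotomic_eq_prod_X_sub_primitiveRoots hz
  have hcard : (primitiveRoots n ℂ).card = n.totient := hz.card_primitiveRoots
  have hxne : ξ ≠ 0 := hξ.ne_zero hm0
  have hconjξ : (starRingEnd ℂ) ξ = ξ⁻¹ :=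
    (Complex.inv_eq_conj (Complex.norm_eq_one_of_pow_eq_one hξ.pow_eq_one hm0)).symm
  have heval : (cyclotomic n ℂ).eval ξ = ∏ μ ∈ primitiveRoots n ℂ, (ξ - μ) := by
    rw [hP, eval_prod]; simp
  set A : ℂ := (cyclotomic n ℂ).eval ξ with hA
  have hAne : A ≠ 0 := by
    intro h
    exact hmn (hξ.unique (isRoot_cyclotomic_iff.mp h))
  -- product of (-μ) over primitive roots equals 1
  have hprodneg : (∏ μ ∈ primitiveRoots n ℂ, (-μ)) = 1 := by
    have h0 : (cyclotomic n ℂ).eval 0 = 1 := by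
      rw [← coeff_zero_eq_eval_zero, cyclotomic_coeff_zero ℂ (by omega)]
    rw [hP, eval_prod] at h0
    simpa using h0
  -- key identity
  have key : ξ ^ n.totient * (starRingEnd ℂ) A = A := by
    rw [show A = ∏ μ ∈ primitiveRoots n ℂ, (ξ - μ) from heval, map_prod]
    rw [← hcard, ← Finset.prod_const, ← Finset.prod_mul_distrib]
    have step : ∀ μ ∈ primitiveRoots n ℂ, ξ * (starRingEnd ℂ) (ξ - μ) = (-(starRingEnd ℂ) μ) * (ξ - μ) := by
      intro μ hμ
      have hμp : IsPrimitiveRoot μ n := (mem_primitiveRoots (Nat.pos_of_ne_zero hn0)).mp hμ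
      have hμne : μ ≠ 0 := hμp.ne_zero hn0
      have hconjμ : (starRingEnd ℂ) μ = μ⁻¹ :=
        (Complex.inv_eq_conj (Complex.norm_eq_one_of_pow_eq_one hμp.pow_eq_one hn0)).symm
      rw [map_sub, hconjξ, hconjμ]
      field_simp
      ring
    rw [Finset.prod_congr rfl step, Finset.prod_mul_distrib]
    have : (∏ μ ∈ primitiveRoots n ℂ, (-(starRingEnd ℂ) μ)) = 1 := by
      have := congrArg (starRingEnd ℂ) hprodneg
      rw [map_prod] at this
      simpa using this
    rw [this, one_mul]
  constructor
  · rintro ⟨-, him⟩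
    have hconjA : (starRingEnd ℂ) A = A := Complex.conj_eq_iff_im.mpr him
    rw [hconjA] at key
    have : ξ ^ n.totient = 1 :=
      mul_right_cancel₀ hAne (by rw [key, one_mul])
    exact (hξ.pow_eq_one_iff_dvd _).mp this
  · intro hdvd
    have hpow : ξ ^ n.totient = 1 := (hξ.pow_eq_one_iff_dvd _).mpr hdvd
    rw [hpow, one_mul] at key
    exact ⟨hAne, Complex.conj_eq_iff_im.mp key⟩
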